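/- Let α = 1/2 and γ ∈ [0,1). There exist constants 0 < c ≤ C < ∞, depending only on γ, such that for all 0 < s < t < ∞ with s > 2(t−s) one has c · (t−s)² (1 + ln(s/(t−s))) / s^γ ≤ Φ(s,t) ≤ C · (t−s)² (1 + ln(s/(t−s))) / s^γ. -/

import Mathlib

open MeasureTheory

/-- The second-moment function
`Φ(s,t) = ∫₀^s ((t-u)^α - (s-u)^α)² u^{-γ} du + ∫_s^t (t-u)^{2α} u^{-γ} du`,
which equals `E[(Z(t)-Z(s))²]` for the generalized Riemann–Liouville FBM `Z`. -/
noncomputable def Phi (α γ s t : ℝ) : ℝ :=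
  (∫ u in Set.Ioo (0:ℝ) s, ((t-u) ^ α - (s-u) ^ α)^2 * u ^ (-γ)) +
    ∫ u in Set.Ioo s t, (t-u) ^ (2*α) * u ^ (-γ)

open Set
lemma sqrt_key {a b : ℝ} (ha : 0 ≤ a) (hab : a ≤ b) :
    (Real.sqrt b - Real.sqrt a)^2 * b ≤ (b - a)^2 ∧
      (b - a)^2 ≤ 4 * ((Real.sqrt b - Real.sqrt a)^2 * b) := by
  have pa := Real.sqrt_nonneg a
  have pb := Real.sqrt_nonneg b
  have ha' := Real.sq_sqrt ha
  have hb' := Real.sq_sqrt (ha.trans hab)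
  have hle := Real.sqrt_le_sqrt hab
  have h1 : b - a = (Real.sqrt b - Real.sqrt a)*(Real.sqrt b + Real.sqrt a) := by
    linear_combination ha' - hb'
  constructor
  · rw [h1, mul_pow]
    apply mul_le_mul_of_nonneg_left _ (sq_nonneg _)
    nlinarith
  · rw [h1, mul_pow]
    nlinarith [sq_nonneg (Real.sqrt b - Real.sqrt a)]

set_option maxHeartbeats 2000000 in
theorem Z_increment_bound_away_critical (γ : ℝ) (hγ0 : 0 ≤ γ) (hγ1 : γ < 1) :
    ∃ c C : ℝ, 0 < c ∧ c ≤ C ∧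
      ∀ s t : ℝ, 0 < s → s < t → 2*(t-s) < s →
        c * (t-s)^2 * (1 + Real.log (s/(t-s))) / s ^ γ ≤ Phi (1/2) γ s t ∧
        Phi (1/2) γ s t ≤ C * (t-s)^2 * (1 + Real.log (s/(t-s))) / s ^ γ := by
  have h1γ : 0 < 1 - γ := by linarith
  refine ⟨1/8, 2/(1-γ) + 3, by norm_num, ?_, ?_⟩
  · have h2 : (0:ℝ) ≤ 2/(1-γ) := by positivity
    linarith
  intro s t hs hst hcl
  have hd : 0 < t - s := by linarith
  have ht : 0 < t := by linarith
  have hsd2 : 2 ≤ s/(t-s) := by rw [le_div_iff₀ hd]; linarith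
  have hlog2 : Real.log 2 ≤ Real.log (s/(t-s)) := Real.log_le_log (by norm_num) hsd2
  have hlog2pos : 0 < Real.log 2 := Real.log_pos one_lt_two
  have hlog2le1 : Real.log 2 ≤ 1 := by
    have := Real.log_le_sub_one_of_pos (show (0:ℝ) < 2 by norm_num); linarith
  set X := Real.log (s/(t-s)) with hX
  have hsγ : 0 < s ^ γ := Real.rpow_pos_of_pos hs γ
  have hsnγ : s ^ (-γ) = (s ^ γ)⁻¹ := Real.rpow_neg hs.le γ
  set m := s ^ (-γ) with hm
  have hmpos : 0 < m := Real.rpow_pos_of_pos hs _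
  -- rewrite Phi
  have hPhi : Phi (1/2) γ s t =
      (∫ u in Set.Ioo (0:ℝ) s, (Real.sqrt (t-u) - Real.sqrt (s-u))^2 * u ^ (-γ)) +
        ∫ u in Set.Ioo s t, (t-u) * u ^ (-γ) := by
    unfold Phi
    norm_num
    simp_rw [Real.sqrt_eq_rpow]
  set F : ℝ → ℝ := fun u => (Real.sqrt (t-u) - Real.sqrt (s-u))^2 * u ^ (-γ) with hF
  set g : ℝ → ℝ := fun u => (t-s)^2 * ((2/s) * u ^ (-γ) + 2^γ * m * (t-u)⁻¹) with hg
  -- basic integrabilities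
  have hwpow : IntegrableOn (fun u : ℝ => u ^ (-γ)) (Ioo 0 s) := by
    have h := (intervalIntegral.intervalIntegrable_rpow'
      (show (-1:ℝ) < -γ by linarith) (a := (0:ℝ)) (b := s))
    rw [intervalIntegrable_iff_integrableOn_Ioc_of_le hs.le] at h
    exact h.mono_set Ioo_subset_Ioc_self
  have hwinv : IntegrableOn (fun u : ℝ => (t-u)⁻¹) (Icc 0 s) := by
    apply ContinuousOn.integrableOn_Icc
    exact ((continuousOn_const.sub continuousOn_id).inv₀
      (fun x hx => ne_of_gt (show (0:ℝ) < t - x by linarith [hx.2])))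
  have hginta : IntegrableOn (fun u : ℝ => (2/s) * u ^ (-γ) + 2^γ * m * (t-u)⁻¹) (Ioo 0 s) :=
    (hwpow.const_mul _).add ((hwinv.mono_set Ioo_subset_Icc_self).const_mul _)
  have hgint : IntegrableOn g (Ioo 0 s) := hginta.const_mul _
  -- pointwise bounds for F on Ioo 0 s
  have hkey : ∀ u ∈ Ioo (0:ℝ) s, 0 ≤ F u ∧ F u ≤ g u := by
    intro u hu
    obtain ⟨hu0, hus⟩ := hu
    have ha0 : (0:ℝ) ≤ s - u := by linarith
    have hab : s - u ≤ t - u := by linarith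
    have hbpos : 0 < t - u := by linarith
    have huγ : 0 ≤ u ^ (-γ) := Real.rpow_nonneg hu0.le _
    obtain ⟨k1, k2⟩ := sqrt_key ha0 hab
    have hdd : (t-u) - (s-u) = t - s := by ring
    rw [hdd] at k1 k2
    refine ⟨mul_nonneg (sq_nonneg _) huγ, ?_⟩
    have hstep : F u ≤ (t-s)^2 * (t-u)⁻¹ * u ^ (-γ) := by
      apply mul_le_mul_of_nonneg_right _ huγ
      rw [← div_eq_mul_inv, le_div_iff₀ hbpos]
      exact k1
    rcases le_or_gt u (s/2) with hc | hc
    · have hinv : (t-u)⁻¹ ≤ 2/s := by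
        rw [show (2:ℝ)/s = (s/2)⁻¹ by rw [inv_div]]
        exact inv_anti₀ (by linarith) (by linarith)
      have h2 : (t-s)^2 * (t-u)⁻¹ * u ^ (-γ) ≤ (t-s)^2 * ((2/s) * u ^ (-γ)) := by
        rw [mul_assoc]
        apply mul_le_mul_of_nonneg_left _ (sq_nonneg _)
        exact mul_le_mul_of_nonneg_right hinv huγ
      have h3 : 0 ≤ (t-s)^2 * (2^γ * m * (t-u)⁻¹) := by positivity
      have hgu : g u = (t-s)^2 * ((2/s) * u ^ (-γ)) + (t-s)^2 * (2^γ * m * (t-u)⁻¹) := by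
        simp only [hg]; ring
      calc F u ≤ (t-s)^2 * (t-u)⁻¹ * u ^ (-γ) := hstep
        _ ≤ (t-s)^2 * ((2/s) * u ^ (-γ)) := h2
        _ ≤ g u := by rw [hgu]; linarith
    · have h1 : u ^ (-γ) ≤ (s/2) ^ (-γ) :=
        Real.rpow_le_rpow_of_nonpos (by linarith) hc.le (by linarith)
      have h2 : (s/2 : ℝ) ^ (-γ) = 2^γ * m := by
        rw [hm, Real.div_rpow hs.le (by norm_num), Real.rpow_neg (by norm_num : (0:ℝ) ≤ 2),
          div_eq_mul_inv, inv_inv, mul_comm]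
      have h3 : 0 ≤ (t-s)^2 * ((2/s) * u ^ (-γ)) := by positivity
      have h4 : (t-s)^2 * (t-u)⁻¹ * u ^ (-γ) ≤ (t-s)^2 * (2^γ * m * (t-u)⁻¹) := by
        have : (t-u)⁻¹ * u ^ (-γ) ≤ 2^γ * m * (t-u)⁻¹ := by
          rw [mul_comm ((2:ℝ)^γ * m) (t-u)⁻¹]
          exact mul_le_mul_of_nonneg_left (h1.trans h2.le) (by positivity)
        calc (t-s)^2 * (t-u)⁻¹ * u ^ (-γ) = (t-s)^2 * ((t-u)⁻¹ * u ^ (-γ)) := by ring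
          _ ≤ (t-s)^2 * (2^γ * m * (t-u)⁻¹) := mul_le_mul_of_nonneg_left this (sq_nonneg _)
      have hgu : g u = (t-s)^2 * ((2/s) * u ^ (-γ)) + (t-s)^2 * (2^γ * m * (t-u)⁻¹) := by
        simp only [hg]; ring
      calc F u ≤ (t-s)^2 * (t-u)⁻¹ * u ^ (-γ) := hstep
        _ ≤ (t-s)^2 * (2^γ * m * (t-u)⁻¹) := h4
        _ ≤ g u := by rw [hgu]; linarith
  -- integrability of F
  have hFmeas : AEStronglyMeasurable F (volume.restrict (Ioo 0 s)) := by
    apply Measurable.aestronglyMeasurable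
    fun_prop
  have hFint : IntegrableOn F (Ioo 0 s) := by
    apply Integrable.mono' hgint hFmeas
    rw [ae_restrict_iff' measurableSet_Ioo]
    filter_upwards with u hu
    rw [Real.norm_eq_abs, abs_of_nonneg (hkey u hu).1]
    exact (hkey u hu).2
  -- integral computations
  have hIlin : (∫ u in Set.Ioo s t, (t-u)) = (t-s)^2/2 := by
    rw [← integral_Ioc_eq_integral_Ioo, ← intervalIntegral.integral_of_le hst.le,
      intervalIntegral.integral_comp_sub_left (fun x => x) t]
    simp [integral_id]
  have hIpow : (∫ u in Set.Ioo (0:ℝ) s, u ^ (-γ)) = s * m / (1 - γ) := by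
    rw [← integral_Ioc_eq_integral_Ioo, ← intervalIntegral.integral_of_le hs.le,
      integral_rpow (Or.inl (by linarith))]
    rw [Real.zero_rpow (by linarith), hm,
      show -γ + 1 = 1 + -γ by ring, Real.rpow_add hs, Real.rpow_one]
    ring
  have hIinv : ∀ c : ℝ, 0 ≤ c → c ≤ s →
      (∫ u in Set.Ioo c s, (t-u)⁻¹) = Real.log ((t-c)/(t-s)) := by
    intro c hc0 hcs
    rw [← integral_Ioc_eq_integral_Ioo, ← intervalIntegral.integral_of_le hcs,
      intervalIntegral.integral_comp_sub_left (fun x => x⁻¹) t]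
    rw [integral_inv_of_pos (by linarith) (by linarith)]
  -- bounds on B
  have hBint : IntegrableOn (fun u : ℝ => (t-u) * u ^ (-γ)) (Ioo s t) := by
    apply (ContinuousOn.integrableOn_Icc ?_).mono_set Ioo_subset_Icc_self
    apply ContinuousOn.mul (continuousOn_const.sub continuousOn_id)
    exact ContinuousOn.rpow_const continuousOn_id
      (fun x hx => Or.inl (ne_of_gt (lt_of_lt_of_le hs hx.1)))
  have hBint2 : ∀ c : ℝ, IntegrableOn (fun u : ℝ => (t-u) * c) (Ioo s t) := by
    intro c
    apply (ContinuousOn.integrableOn_Icc ?_).mono_set Ioo_subset_Icc_self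
    exact ContinuousOn.mul (continuousOn_const.sub continuousOn_id) continuousOn_const
  have hBu : (∫ u in Set.Ioo s t, (t-u) * u ^ (-γ)) ≤ m * ((t-s)^2/2) := by
    calc (∫ u in Set.Ioo s t, (t-u) * u ^ (-γ)) ≤ ∫ u in Set.Ioo s t, (t-u) * m := by
          apply setIntegral_mono_on hBint (hBint2 m) measurableSet_Ioo
          intro u hu
          apply mul_le_mul_of_nonneg_left _ (by linarith [hu.2] : (0:ℝ) ≤ t - u)
          exact Real.rpow_le_rpow_of_nonpos hs hu.1.le (by linarith)
      _ = (∫ u in Set.Ioo s t, (t-u)) * m := by rw [integral_mul_const]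
      _ = m * ((t-s)^2/2) := by rw [hIlin]; ring
  have hBl : m/2 * ((t-s)^2/2) ≤ ∫ u in Set.Ioo s t, (t-u) * u ^ (-γ) := by
    have hm2 : m/2 ≤ t ^ (-γ) := by
      have h1 : (2*s : ℝ) ^ (-γ) ≤ t ^ (-γ) :=
        Real.rpow_le_rpow_of_nonpos ht (by linarith) (by linarith)
      have h2 : (2*s : ℝ) ^ (-γ) = 2 ^ (-γ) * m := by
        rw [hm, Real.mul_rpow (by norm_num : (0:ℝ) ≤ 2) hs.le]
      have h3 : (1/2 : ℝ) ≤ 2 ^ (-γ) := by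
        have := Real.rpow_le_rpow_of_exponent_le (show (1:ℝ) ≤ 2 by norm_num)
          (show -1 ≤ -γ by linarith)
        rw [Real.rpow_neg_one] at this
        linarith
      nlinarith
    calc m/2 * ((t-s)^2/2) = (∫ u in Set.Ioo s t, (t-u)) * (m/2) := by rw [hIlin]; ring
      _ = ∫ u in Set.Ioo s t, (t-u) * (m/2) := by rw [integral_mul_const]
      _ ≤ ∫ u in Set.Ioo s t, (t-u) * u ^ (-γ) := by
          apply setIntegral_mono_on (hBint2 _) hBint measurableSet_Ioo
          intro u hu
          apply mul_le_mul_of_nonneg_left _ (by linarith [hu.2] : (0:ℝ) ≤ t - u)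
          have : t ^ (-γ) ≤ u ^ (-γ) :=
            Real.rpow_le_rpow_of_nonpos (lt_trans hs hu.1) hu.2.le (by linarith)
          linarith
  -- upper bound on A
  have hAu : (∫ u in Set.Ioo (0:ℝ) s, F u) ≤
      (t-s)^2 * ((2/s) * (s * m / (1-γ)) + 2^γ * m * Real.log (t/(t-s))) := by
    calc (∫ u in Set.Ioo (0:ℝ) s, F u) ≤ ∫ u in Set.Ioo (0:ℝ) s, g u :=
          setIntegral_mono_on hFint hgint measurableSet_Ioo (fun u hu => (hkey u hu).2)
      _ = (t-s)^2 * ∫ u in Set.Ioo (0:ℝ) s, ((2/s) * u ^ (-γ) + 2^γ * m * (t-u)⁻¹) := by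
          simp only [hg]; rw [integral_const_mul]
      _ = (t-s)^2 * ((2/s) * (s * m / (1-γ)) + 2^γ * m * Real.log (t/(t-s))) := by
          rw [integral_add (hwpow.const_mul _) ((hwinv.mono_set Ioo_subset_Icc_self).const_mul _),
            integral_const_mul, integral_const_mul, hIpow, hIinv 0 le_rfl hs.le, sub_zero]
  -- lower bound on A
  have hAl : (t-s)^2 * m / 4 * Real.log ((t-s/2)/(t-s)) ≤ ∫ u in Set.Ioo (0:ℝ) s, F u := by
    have hsub : Ioo (s/2) s ⊆ Ioo (0:ℝ) s := Ioo_subset_Ioo (by linarith) le_rfl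
    have hlint : IntegrableOn (fun u : ℝ => (t-s)^2 * m / 4 * (t-u)⁻¹) (Ioo (s/2) s) := by
      apply ((hwinv.mono_set ?_).const_mul _)
      intro x hx
      exact ⟨by linarith [hx.1], hx.2.le⟩
    calc (t-s)^2 * m / 4 * Real.log ((t-s/2)/(t-s))
        = ∫ u in Set.Ioo (s/2) s, (t-s)^2 * m / 4 * (t-u)⁻¹ := by
          rw [integral_const_mul, hIinv (s/2) (by linarith) (by linarith)]
      _ ≤ ∫ u in Set.Ioo (s/2) s, F u := by
          apply setIntegral_mono_on hlint (hFint.mono_set hsub) measurableSet_Ioo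
          intro u hu
          simp only [hF]
          obtain ⟨hu1, hu2⟩ := hu
          have hu0 : 0 < u := by linarith
          have ha0 : (0:ℝ) ≤ s - u := by linarith
          have hab : s - u ≤ t - u := by linarith
          have hbpos : 0 < t - u := by linarith
          obtain ⟨k1, k2⟩ := sqrt_key ha0 hab
          have hdd : (t-u) - (s-u) = t - s := by ring
          rw [hdd] at k2
          have e1 : (t-s)^2 / 4 * (t-u)⁻¹ ≤ (Real.sqrt (t-u) - Real.sqrt (s-u))^2 := by
            rw [← div_eq_mul_inv, div_div, div_le_iff₀ (by linarith : (0:ℝ) < 4*(t-u))]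
            calc (t-s)^2 ≤ 4 * ((Real.sqrt (t-u) - Real.sqrt (s-u))^2 * (t-u)) := k2
              _ = (Real.sqrt (t-u) - Real.sqrt (s-u))^2 * (4*(t-u)) := by ring
          have e2 : m ≤ u ^ (-γ) :=
            Real.rpow_le_rpow_of_nonpos hu0 hu2.le (by linarith)
          calc (t-s)^2 * m / 4 * (t-u)⁻¹ = ((t-s)^2/4 * (t-u)⁻¹) * m := by ring
            _ ≤ (Real.sqrt (t-u) - Real.sqrt (s-u))^2 * u ^ (-γ) := by
                apply mul_le_mul e1 e2 hmpos.le (sq_nonneg _)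
      _ ≤ ∫ u in Set.Ioo (0:ℝ) s, F u := by
          apply setIntegral_mono_set hFint ?_ (HasSubset.Subset.eventuallyLE hsub)
          exact (ae_restrict_mem measurableSet_Ioo).mono (fun u hu => (hkey u hu).1)
  -- log comparisons
  have hlogt : Real.log (t/(t-s)) ≤ 1 + X := by
    have h1 : t/(t-s) ≤ (3/2) * (s/(t-s)) := by
      rw [show (3:ℝ)/2 * (s/(t-s)) = (3/2*s)/(t-s) by ring, div_le_div_iff₀ hd hd]
      nlinarith
    have h2 : Real.log (t/(t-s)) ≤ Real.log ((3/2) * (s/(t-s))) :=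
      Real.log_le_log (by positivity) h1
    rw [Real.log_mul (by norm_num) (by positivity)] at h2
    have h3 : Real.log (3/2) ≤ 1 := by
      have := Real.log_le_sub_one_of_pos (show (0:ℝ) < 3/2 by norm_num); linarith
    rw [hX]; linarith
  have hlogl : X - Real.log 2 ≤ Real.log ((t-s/2)/(t-s)) := by
    have h1 : (s/2)/(t-s) ≤ (t-s/2)/(t-s) := by
      rw [div_le_div_iff₀ hd hd]
      nlinarith
    have h2 : Real.log ((s/2)/(t-s)) = X - Real.log 2 := by
      rw [show (s/2)/(t-s) = (s/(t-s))/2 by ring, Real.log_div (by positivity) (by norm_num), hX]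
    calc X - Real.log 2 = Real.log ((s/2)/(t-s)) := h2.symm
      _ ≤ Real.log ((t-s/2)/(t-s)) := Real.log_le_log (by positivity) h1
  have hXpos : 0 < X := lt_of_lt_of_le hlog2pos hlog2
  -- assemble
  rw [hPhi]
  constructor
  · have hscalar : (1/8 : ℝ)*(1+X) ≤ (1/4)*(X - Real.log 2) + 1/4 := by linarith
    have hP : (0:ℝ) ≤ (t-s)^2 * m := by positivity
    calc (1/8) * (t-s)^2 * (1+X) / s ^ γ = ((1/8)*(1+X)) * ((t-s)^2 * m) := by
          rw [hsnγ]; ring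
      _ ≤ ((1/4)*(X - Real.log 2) + 1/4) * ((t-s)^2 * m) :=
          mul_le_mul_of_nonneg_right hscalar hP
      _ = (t-s)^2 * m / 4 * (X - Real.log 2) + m/2 * ((t-s)^2/2) := by ring
      _ ≤ (t-s)^2 * m / 4 * Real.log ((t-s/2)/(t-s)) + m/2 * ((t-s)^2/2) := by
          refine add_le_add ?_ le_rfl
          exact mul_le_mul_of_nonneg_left hlogl (by positivity)
      _ ≤ _ := add_le_add hAl hBl
  · have hlogtnn : 0 ≤ Real.log (t/(t-s)) := by
      apply Real.log_nonneg
      rw [le_div_iff₀ hd]; linarith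
    have h2γ : (2:ℝ)^γ ≤ 2 := by
      have := Real.rpow_le_rpow_of_exponent_le (show (1:ℝ) ≤ 2 by norm_num) hγ1.le
      rwa [Real.rpow_one] at this
    have h2γ0 : (0:ℝ) ≤ 2^γ := by positivity
    have hmid : 2^γ * m * Real.log (t/(t-s)) ≤ 2 * m * (1 + X) := by
      have := mul_le_mul (mul_le_mul h2γ le_rfl hmpos.le (by norm_num)) hlogt hlogtnn
        (by positivity)
      linarith [this]
    have hD : (0:ℝ) ≤ 2/(1-γ) := by positivity
    calc (∫ u in Set.Ioo (0:ℝ) s, F u) + (∫ u in Set.Ioo s t, (t-u) * u ^ (-γ))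
        ≤ (t-s)^2 * ((2/s) * (s * m / (1-γ)) + 2^γ * m * Real.log (t/(t-s)))
            + m * ((t-s)^2/2) := add_le_add hAu hBu
      _ = (t-s)^2 * (2 * m/(1-γ) + 2^γ * m * Real.log (t/(t-s))) + m * ((t-s)^2/2) := by
          rw [show (2/s) * (s * m / (1-γ)) = 2 * (s/s) * m / (1-γ) by ring,
            div_self (ne_of_gt hs)]; ring
      _ ≤ (t-s)^2 * (2 * m/(1-γ) + 2 * m * (1+X)) + m * ((t-s)^2/2) := by
          refine add_le_add ?_ le_rfl
          exact mul_le_mul_of_nonneg_left (by linarith [hmid]) (sq_nonneg _)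
      _ ≤ (2/(1-γ) + 3) * (t-s)^2 * (1+X) / s ^ γ := by
          have hsc : 2/(1-γ) + 2*(1+X) + 1/2 ≤ (2/(1-γ) + 3) * (1+X) := by
            nlinarith [mul_nonneg hD hXpos.le]
          calc (t-s)^2 * (2 * m/(1-γ) + 2 * m * (1+X)) + m * ((t-s)^2/2)
              = (2/(1-γ) + 2*(1+X) + 1/2) * ((t-s)^2 * m) := by ring
            _ ≤ ((2/(1-γ) + 3) * (1+X)) * ((t-s)^2 * m) := by
                apply mul_le_mul_of_nonneg_right hsc (by positivity)
            _ = (2/(1-γ) + 3) * (t-s)^2 * (1+X) / (s ^ γ) := by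
                rw [hsnγ, div_eq_mul_inv]; ring
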